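/- Let p be a prime, k = ℤ/pℤ, and J an ideal of k[X_1,…,X_n]. For v ∈ ℕ^n, write X^v = Π_i X_i^{v_i}. Then for every e ≥ 1 and v ∈ ℕ^n, the colon ideal satisfies (J^{[p^e]} : X^{pv}) = (J^{[p^{e−1}]} : X^v)^{[p]}. -/

import Mathlib

open MvPolynomial

/-- The q-th bracket (Frobenius) power of an ideal: the ideal generated by q-th powers. -/
noncomputable def bracketPow {n : ℕ} {R : Type*} [CommRing R] (I : Ideal (MvPolynomial (Fin n) R))
    (q : ℕ) : Ideal (MvPolynomial (Fin n) R) :=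
  Ideal.span ((fun g => g ^ q) '' (I : Set (MvPolynomial (Fin n) R)))

namespace Stmt5Aux

variable {n p : ℕ} {R : Type*} [CommRing R]

/-- componentwise `% p` -/
noncomputable def modp (p : ℕ) (m : Fin n →₀ ℕ) : Fin n →₀ ℕ := m.mapRange (· % p) (Nat.zero_mod p)

/-- componentwise `/ p` -/
noncomputable def divp (p : ℕ) (m : Fin n →₀ ℕ) : Fin n →₀ ℕ := m.mapRange (· / p) (Nat.zero_div p)

@[simp] lemma modp_apply (p : ℕ) (m : Fin n →₀ ℕ) (i : Fin n) : modp p m i = m i % p :=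
  Finsupp.mapRange_apply ..

@[simp] lemma divp_apply (p : ℕ) (m : Fin n →₀ ℕ) (i : Fin n) : divp p m i = m i / p :=
  Finsupp.mapRange_apply ..

lemma divp_add_modp (m : Fin n →₀ ℕ) : p • divp p m + modp p m = m := by
  ext i
  simp [Nat.div_add_mod]

lemma modp_smul_add (d m : Fin n →₀ ℕ) : modp p (p • d + m) = modp p m := by
  ext i
  simp [Nat.mul_add_mod]

lemma divp_smul_add (hp : 0 < p) (d m : Fin n →₀ ℕ) : divp p (p • d + m) = d + divp p m := by
  ext i
  simp [Nat.mul_add_div hp]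

lemma modp_eq_self {u : Fin n →₀ ℕ} (hu : ∀ i, u i < p) : modp p u = u := by
  ext i; simp [Nat.mod_eq_of_lt (hu i)]

lemma divp_eq_zero {u : Fin n →₀ ℕ} (hu : ∀ i, u i < p) : divp p u = 0 := by
  ext i; simp [Nat.div_eq_of_lt (hu i)]

/-- the `u`-th component of `h` in the monomial basis over the image of Frobenius -/
noncomputable def sec (p : ℕ) (u : Fin n →₀ ℕ) (h : MvPolynomial (Fin n) R) :
    MvPolynomial (Fin n) R :=
  ∑ m ∈ h.support, if modp p m = u then monomial (divp p m) (coeff m h) else 0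

lemma coeff_sec (hp : 0 < p) (u w : Fin n →₀ ℕ) (h : MvPolynomial (Fin n) R) :
    coeff w (sec p u h) = if ∀ i, u i < p then coeff (p • w + u) h else 0 := by
  unfold sec
  rw [coeff_sum]
  simp only [apply_ite (coeff w), coeff_monomial, coeff_zero]
  by_cases hu : ∀ i, u i < p
  · rw [if_pos hu]
    have key : ∀ m ∈ h.support,
        (if modp p m = u then if divp p m = w then coeff m h else 0 else 0)
          = if m = p • w + u then coeff m h else 0 := by
      intro m _
      by_cases h1 : m = p • w + u
      · subst h1
        rw [if_pos rfl, if_pos, if_pos]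
        · rw [divp_smul_add hp, divp_eq_zero hu, add_zero]
        · rw [modp_smul_add, modp_eq_self hu]
      · rw [if_neg h1]
        split_ifs with h2 h3
        · exact absurd (by rw [← divp_add_modp (p := p) m, h2, h3]) h1
        · rfl
        · rfl
    rw [Finset.sum_congr rfl key, Finset.sum_ite_eq' h.support (p • w + u) (fun m => coeff m h)]
    by_cases hin : p • w + u ∈ h.support
    · rw [if_pos hin]
    · rw [if_neg hin, (notMem_support_iff).mp hin]
  · rw [if_neg hu]
    apply Finset.sum_eq_zero
    intro m _
    have hne : modp p m ≠ u := by
      intro hmu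
      apply hu
      intro i
      rw [← hmu]
      simpa using Nat.mod_lt (m i) hp
    rw [if_neg hne]

lemma sec_zero (u : Fin n →₀ ℕ) : sec p u (0 : MvPolynomial (Fin n) R) = 0 := by
  simp [sec]

lemma sec_add (hp : 0 < p) (u : Fin n →₀ ℕ) (f g : MvPolynomial (Fin n) R) :
    sec p u (f + g) = sec p u f + sec p u g := by
  apply MvPolynomial.ext
  intro w
  simp only [coeff_sec hp, coeff_add]
  split_ifs <;> simp

lemma sec_sum (hp : 0 < p) (u : Fin n →₀ ℕ) {α : Type*} (s : Finset α)
    (g : α → MvPolynomial (Fin n) R) :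
    sec p u (∑ i ∈ s, g i) = ∑ i ∈ s, sec p u (g i) := by
  classical
  induction s using Finset.induction with
  | empty => simp [sec_zero]
  | insert x s hx ih => simp [Finset.sum_insert hx, sec_add hp, ih]

lemma sec_monomial (u m : Fin n →₀ ℕ) (c : R) :
    sec p u (monomial m c) = if modp p m = u then monomial (divp p m) c else 0 := by
  classical
  by_cases hc : c = 0
  · simp [hc, sec_zero]
  · unfold sec
    rw [support_monomial, if_neg hc, Finset.sum_singleton, coeff_monomial, if_pos rfl]

lemma expand_monomial' (hp : 0 < p) (d : Fin n →₀ ℕ) (a : R) :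
    expand p (monomial d a) = monomial (p • d) a := by
  rw [monomial_eq, monomial_eq, map_mul, expand_C]
  congr 1
  have hd : p • d = Finsupp.mapRange (p * ·) (mul_zero p) d := by
    ext i; simp [mul_comm]
  rw [hd, Finsupp.prod_mapRange_index (fun i => pow_zero (X i)), map_finsuppProd]
  apply Finsupp.prod_congr
  intro i _
  rw [map_pow, expand_X, ← pow_mul]

lemma sec_expand_mul_monomial (hp : 0 < p) (u m : Fin n →₀ ℕ) (c : MvPolynomial (Fin n) R)
    (c0 : R) :
    sec p u (expand p c * monomial m c0)
      = if modp p m = u then c * monomial (divp p m) c0 else 0 := by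
  classical
  induction c using MvPolynomial.induction_on' with
  | monomial d a =>
    rw [expand_monomial' hp, monomial_mul, sec_monomial, modp_smul_add, divp_smul_add hp,
      monomial_mul]
  | add f g hf hg =>
    rw [map_add, add_mul, sec_add hp, hf, hg, add_mul]
    split_ifs <;> simp

lemma sec_expand_mul (hp : 0 < p) (u : Fin n →₀ ℕ) (c b : MvPolynomial (Fin n) R) :
    sec p u (expand p c * b) = c * sec p u b := by
  classical
  induction b using MvPolynomial.induction_on' with
  | monomial m c0 =>
    rw [sec_expand_mul_monomial hp, sec_monomial, mul_ite, mul_zero]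
  | add f g hf hg =>
    rw [mul_add, sec_add hp, sec_add hp, hf, hg, mul_add]

/-- the finitely supported exponent vector attached to `u : Fin n → Fin p` -/
noncomputable def tofs (u : Fin n → Fin p) : Fin n →₀ ℕ := Finsupp.equivFunOnFinite.symm (fun i => (u i : ℕ))

@[simp] lemma tofs_apply (u : Fin n → Fin p) (i : Fin n) : tofs u i = (u i : ℕ) := rfl

lemma decomp (hp : 0 < p) (h : MvPolynomial (Fin n) R) :
    ∑ u : Fin n → Fin p, expand p (sec p (tofs u) h) * monomial (tofs u) 1 = h := by
  classical
  induction h using MvPolynomial.induction_on' with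
  | monomial m c =>
    have u₀ : Fin n → Fin p := fun i => ⟨m i % p, Nat.mod_lt _ hp⟩
    rw [Fintype.sum_eq_single (fun i => (⟨m i % p, Nat.mod_lt _ hp⟩ : Fin p)) ?_]
    · have htof : tofs (fun i => (⟨m i % p, Nat.mod_lt _ hp⟩ : Fin p)) = modp p m := by
        ext i; simp
      rw [htof, sec_monomial, if_pos rfl, expand_monomial' hp, monomial_mul, mul_one,
        divp_add_modp]
    · intro u hu
      have hne : modp p m ≠ tofs u := by
        intro hmu
        apply hu
        funext i
        have := congrArg (fun f => f i) hmu
        simp only [modp_apply, tofs_apply] at this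
        exact Fin.ext this.symm
      rw [sec_monomial, if_neg hne, map_zero, zero_mul]
  | add f g hf hg =>
    conv_rhs => rw [← hf, ← hg]
    rw [← Finset.sum_add_distrib]
    apply Finset.sum_congr rfl
    intro u _
    rw [sec_add hp, map_add, add_mul]

end Stmt5Aux

open Stmt5Aux

section Main

variable {n p : ℕ}

local notation "S" => MvPolynomial (Fin n) (ZMod p)

lemma expand_eq_pow (hp : p.Prime) (c : S) : expand p c = c ^ p := by
  haveI := Fact.mk hp
  induction c using MvPolynomial.induction_on' with
  | monomial d a => rw [expand_monomial' hp.pos, monomial_pow, ZMod.pow_card]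
  | add f g hf hg => rw [map_add, hf, hg, add_pow_char]

lemma step1 (hp : p.Prime) (I : Ideal S) (x : S)
    (hx : x ∈ Ideal.map (expand p : S →ₐ[ZMod p] S) I) (u : Fin n →₀ ℕ) :
    sec p u x ∈ I := by
  have hx' : x ∈ Ideal.span ((expand p : S →ₐ[ZMod p] S) '' I) := hx
  obtain ⟨c, hc, rfl⟩ := Submodule.mem_span_set.mp hx'
  rw [Finsupp.sum, sec_sum hp.pos]
  apply Ideal.sum_mem
  intro mi hmi
  obtain ⟨g, hgI, rfl⟩ := hc hmi
  rw [smul_eq_mul, mul_comm, sec_expand_mul hp.pos]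
  exact Ideal.mul_mem_right _ I hgI

lemma colon_map_expand (hp : p.Prime) (I : Ideal S) (f : S) :
    (Ideal.map (expand p : S →ₐ[ZMod p] S) I).colon (Ideal.span {expand p f})
      = Ideal.map (expand p : S →ₐ[ZMod p] S) (I.colon (Ideal.span {f})) := by
  apply le_antisymm
  · intro h hh
    rw [Ideal.mem_colon_span_singleton] at hh
    rw [← decomp hp.pos h]
    apply Ideal.sum_mem
    intro u _
    apply Ideal.mul_mem_right
    apply Ideal.mem_map_of_mem
    rw [Ideal.mem_colon_span_singleton, mul_comm, ← sec_expand_mul hp.pos]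
    exact step1 hp I _ (by rwa [mul_comm] at hh) _
  · rw [Ideal.map_le_iff_le_comap]
    intro g hg
    rw [Ideal.mem_comap, Ideal.mem_colon_span_singleton, ← map_mul]
    exact Ideal.mem_map_of_mem _ (Ideal.mem_colon_span_singleton.mp hg)

lemma bracketPow_eq_map (hp : p.Prime) (I : Ideal S) :
    bracketPow I p = Ideal.map (expand p : S →ₐ[ZMod p] S) I := by
  show Ideal.span _ = Ideal.span _
  congr 1
  exact Set.image_congr fun g _ => (expand_eq_pow hp g).symm

end Main

/-- (J^{[p^e]} : X^{pv}) = (J^{[p^{e-1}]} : X^v)^{[p]} over ℤ/pℤ. -/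
theorem stmt5 (n : ℕ) (p : ℕ) (hp : p.Prime)
    (J : Ideal (MvPolynomial (Fin n) (ZMod p))) (e : ℕ) (he : 1 ≤ e) (v : Fin n → ℕ) :
    (bracketPow J (p ^ e)).colon (Ideal.span {∏ i, (X i : MvPolynomial (Fin n) (ZMod p)) ^ (p * v i)}) =
      bracketPow ((bracketPow J (p ^ (e - 1))).colon
        (Ideal.span {∏ i, (X i : MvPolynomial (Fin n) (ZMod p)) ^ v i})) p := by
  have hm : (∏ i, (X i : MvPolynomial (Fin n) (ZMod p)) ^ (p * v i))
      = expand p (∏ i, (X i : MvPolynomial (Fin n) (ZMod p)) ^ v i) := by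
    rw [map_prod]
    apply Finset.prod_congr rfl
    intro i _
    rw [map_pow, expand_X, ← pow_mul]
  have hb2 : bracketPow J (p ^ e)
      = Ideal.map (expand p : MvPolynomial (Fin n) (ZMod p) →ₐ[ZMod p] _)
          (bracketPow J (p ^ (e - 1))) := by
    rw [bracketPow, bracketPow, Ideal.map_span, Set.image_image]
    congr 1
    apply Set.image_congr
    intro g _
    rw [expand_eq_pow hp, ← pow_mul, ← pow_succ]
    congr 2
    omega
  rw [hb2, hm, colon_map_expand hp, bracketPow_eq_map hp]
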